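/- arXiv:0712.4362 — 3 statements merged into one kernel-verified Lean document; each statement's English description precedes it below -/
import Mathlib

section
/- If M and N are similar right R-modules, then the centers of their endomorphism rings are isomorphic: End_{E_M}(M) ≅ End_{E_N}(N), where E_M = End(M_R) and E_N = End(N_R); equivalently Z(E_M) ≅ Z(E_N). -/
section Helpers

variable {S : Type} [Ring S] {M M' N : Type} [AddCommGroup M] [Module S M]
  [AddCommGroup M'] [Module S M'] [AddCommGroup N] [Module S N]

/-- A central endomorphism commutes with maps out of a finite power. -/
theorem central_out (z : Module.End S N) (hz : z ∈ Subring.center (Module.End S N))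
    {ι : Type} [Fintype ι] [DecidableEq ι] (G : (ι → N) →ₗ[S] N) (x : ι → N) :
    G (fun i => z (x i)) = z (G x) := by
  have hz' : ∀ (e : Module.End S N) (a : N), e (z a) = z (e a) := by
    intro e a
    have := Subring.mem_center_iff.mp hz e
    calc e (z a) = (e * z) a := rfl
    _ = (z * e) a := by rw [this]
    _ = z (e a) := rfl
  have hx : ∀ y : ι → N, G y = ∑ i, (G ∘ₗ LinearMap.single S (fun _ : ι => N) i) (y i) := by
    intro y
    conv_lhs => rw [← Finset.univ_sum_single y, map_sum]
    rfl
  rw [hx, hx x, map_sum]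
  refine Finset.sum_congr rfl fun i _ => ?_
  exact hz' _ (x i)

/-- A central endomorphism commutes with maps into a finite power. -/
theorem central_in (z : Module.End S N) (hz : z ∈ Subring.center (Module.End S N))
    {ι : Type} (F : N →ₗ[S] (ι → N)) (x : N) :
    F (z x) = fun i => z (F x i) := by
  funext i
  have := Subring.mem_center_iff.mp hz ((LinearMap.proj i : _ →ₗ[S] N) ∘ₗ F)
  calc F (z x) i = (((LinearMap.proj i : _ →ₗ[S] N) ∘ₗ F) * z) x := rfl
  _ = (z * ((LinearMap.proj i : _ →ₗ[S] N) ∘ₗ F)) x := by rw [this]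
  _ = z (F x i) := rfl

/-- A central endomorphism commutes componentwise with maps between finite powers. -/
theorem central_between (z : Module.End S N) (hz : z ∈ Subring.center (Module.End S N))
    {ι κ : Type} [Fintype ι] [DecidableEq ι] (β : (ι → N) →ₗ[S] (κ → N)) (x : ι → N) :
    β (fun i => z (x i)) = fun j => z (β x j) := by
  funext j
  exact central_out z hz ((LinearMap.proj j : _ →ₗ[S] N) ∘ₗ β) x

/-- Transfer of an endomorphism along a "divides" presentation. -/
def transfer {ι : Type} (f : M →ₗ[S] (ι → N)) (g : (ι → N) →ₗ[S] M)
    (z : Module.End S N) : Module.End S M :=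
  g ∘ₗ z.compLeft ι ∘ₗ f

theorem transfer_apply {ι : Type} (f : M →ₗ[S] (ι → N)) (g : (ι → N) →ₗ[S] M)
    (z : Module.End S N) (m : M) : transfer f g z m = g (fun i => z (f m i)) := rfl

theorem transfer_natural {ι κ : Type} [Fintype ι] [DecidableEq ι]
    (f : M →ₗ[S] (ι → N)) (g : (ι → N) →ₗ[S] M) (hg : ∀ m, g (f m) = m)
    (f' : M' →ₗ[S] (κ → N)) (g' : (κ → N) →ₗ[S] M') (hg' : ∀ m, g' (f' m) = m)
    (z : Module.End S N) (hz : z ∈ Subring.center (Module.End S N))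
    (α : M →ₗ[S] M') (m : M) :
    transfer f' g' z (α m) = α (transfer f g z m) := by
  rw [transfer_apply, transfer_apply]
  have h1 : f' (α m) = (f' ∘ₗ α ∘ₗ g) (f m) := by simp [hg m]
  rw [h1]
  have h2 : (fun j => z ((f' ∘ₗ α ∘ₗ g) (f m) j)) = (f' ∘ₗ α ∘ₗ g) (fun i => z (f m i)) :=
    (central_between z hz (f' ∘ₗ α ∘ₗ g) (f m)).symm
  calc g' (fun j => z ((f' ∘ₗ α ∘ₗ g) (f m) j))
      = g' ((f' ∘ₗ α ∘ₗ g) (fun i => z (f m i))) := by rw [h2]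
    _ = α (g (fun i => z (f m i))) := hg' _

theorem transfer_central {ι : Type} [Fintype ι] [DecidableEq ι]
    (f : M →ₗ[S] (ι → N)) (g : (ι → N) →ₗ[S] M) (hg : ∀ m, g (f m) = m)
    (z : Module.End S N) (hz : z ∈ Subring.center (Module.End S N)) :
    transfer f g z ∈ Subring.center (Module.End S M) := by
  rw [Subring.mem_center_iff]
  intro α
  ext m
  exact (transfer_natural f g hg f g hg z hz α m).symm

theorem transfer_mul {ι : Type} [Fintype ι] [DecidableEq ι]
    (f : M →ₗ[S] (ι → N)) (g : (ι → N) →ₗ[S] M) (hg : ∀ m, g (f m) = m)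
    (z w : Module.End S N) (hz : z ∈ Subring.center (Module.End S N)) :
    transfer f g (z * w) = transfer f g z * transfer f g w := by
  ext m
  show transfer f g (z * w) m = transfer f g z (transfer f g w m)
  rw [transfer_apply, transfer_apply, transfer_apply]
  have h3 := central_between z hz (f ∘ₗ g) (fun i => w (f m i))
  have h4 : (fun j => z (f (g (fun i => w (f m i))) j))
      = (fun j => z ((f ∘ₗ g) (fun i => w (f m i)) j)) := rfl
  rw [h4, ← h3]
  show g (fun i => z (w (f m i))) = g (f (g (fun i => z (w (f m i)))))
  exact (hg _).symm

theorem transfer_one {ι : Type} (f : M →ₗ[S] (ι → N)) (g : (ι → N) →ₗ[S] M)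
    (hg : ∀ m, g (f m) = m) : transfer f g 1 = 1 := by
  ext m
  simpa [transfer_apply] using hg m

theorem transfer_add {ι : Type} (f : M →ₗ[S] (ι → N)) (g : (ι → N) →ₗ[S] M)
    (z w : Module.End S N) : transfer f g (z + w) = transfer f g z + transfer f g w := by
  ext m
  show g (fun i => (z + w) (f m i)) = g (fun i => z (f m i)) + g (fun i => w (f m i))
  rw [← map_add]
  rfl

theorem central_out2 (z : Module.End S N) (hz : z ∈ Subring.center (Module.End S N))
    {ι κ : Type} [Fintype ι] [DecidableEq ι] [Fintype κ] [DecidableEq κ]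
    (G : (ι → κ → N) →ₗ[S] N) (y : ι → κ → N) :
    G (fun i j => z (y i j)) = z (G y) := by
  have h := central_out z hz (G ∘ₗ (LinearEquiv.curry S N ι κ).toLinearMap)
    (fun p => y p.1 p.2)
  exact h

theorem transfer_transfer {ι κ : Type} [Fintype ι] [DecidableEq ι] [Fintype κ] [DecidableEq κ]
    (f : M →ₗ[S] (ι → N)) (g : (ι → N) →ₗ[S] M) (hg : ∀ x, g (f x) = x)
    (f' : N →ₗ[S] (κ → M)) (g' : (κ → M) →ₗ[S] N) (hg' : ∀ x, g' (f' x) = x)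
    (z : Module.End S N) (hz : z ∈ Subring.center (Module.End S N)) :
    transfer f' g' (transfer f g z) = z := by
  ext x
  show g' (fun i => g (fun j => z (f (f' x i) j))) = z x
  have h := central_out2 z hz (g' ∘ₗ LinearMap.compLeft g κ) (fun i => f (f' x i))
  have hy : (fun i => g (f (f' x i))) = f' x := by funext i; exact hg _
  calc g' (fun i => g (fun j => z (f (f' x i) j)))
      = z (g' (fun i => g (f (f' x i)))) := h
    _ = z x := by rw [hy, hg']

end Helpers



/-- `M` divides `N` as modules: `M` is a direct summand of `N^(n)` for some `n`. -/
def Divides (R : Type) [Ring R] (M N : Type) [AddCommGroup M] [Module R M]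
    [AddCommGroup N] [Module R N] : Prop :=
  ∃ (n : ℕ) (f : M →ₗ[R] (Fin n → N)) (g : (Fin n → N) →ₗ[R] M), ∀ m : M, g (f m) = m

/-- Similarity: each module is a direct summand of a finite direct sum of copies
of the other. -/
def SimilarModules (R : Type) [Ring R] (M N : Type) [AddCommGroup M] [Module R M]
    [AddCommGroup N] [Module R N] : Prop :=
  Divides R M N ∧ Divides R N M

/-- If `M ∼ N` as right `R`-modules, then the centers of their endomorphism rings are
isomorphic: `Z(End(M_R)) ≅ Z(End(N_R))` (equivalently `End_{E_M}(M) ≅ End_{E_N}(N)`). -/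
theorem similar_implies_isomorphic_centers (R : Type) [Ring R]
    (M N : Type) [AddCommGroup M] [Module Rᵐᵒᵖ M] [AddCommGroup N] [Module Rᵐᵒᵖ N]
    (h : SimilarModules Rᵐᵒᵖ M N) :
    Nonempty (Subring.center (Module.End Rᵐᵒᵖ M) ≃+* Subring.center (Module.End Rᵐᵒᵖ N)) := by
  obtain ⟨⟨n, f, g, hg⟩, ⟨m, f', g', hg'⟩⟩ := h
  exact ⟨{
    toFun := fun z => ⟨transfer f' g' z.1, transfer_central f' g' hg' z.1 z.2⟩
    invFun := fun z => ⟨transfer f g z.1, transfer_central f g hg z.1 z.2⟩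
    left_inv := fun z => Subtype.ext (transfer_transfer f' g' hg' f g hg z.1 z.2)
    right_inv := fun z => Subtype.ext (transfer_transfer f g hg f' g' hg' z.1 z.2)
    map_mul' := fun z w => Subtype.ext (transfer_mul f' g' hg' z.1 w.1 z.2)
    map_add' := fun z w => Subtype.ext (transfer_add f' g' z.1 w.1) }⟩
end

section
/- A ring extension B → A is a QF extension (both left and right QF) if and only if the left B-module A is finitely generated projective and A ∼ (_BA)* = Hom_B(A, B) as (A, B)-bimodules. -/
open scoped TensorProduct

noncomputable section

section Bimod

variable (L R : Type) [Ring L] [Ring R]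

def BDiv {M N : Type} [AddCommGroup M] [AddCommGroup N]
    (lM : L → M → M) (rM : M → R → M) (lN : L → N → N) (rN : N → R → N) : Prop :=
  ∃ (n : ℕ) (f : M →+ (Fin n → N)) (g : (Fin n → N) →+ M),
    (∀ (l : L) (m : M), f (lM l m) = fun i => lN l (f m i)) ∧
    (∀ (m : M) (r : R), f (rM m r) = fun i => rN (f m i) r) ∧
    (∀ (l : L) (v : Fin n → N), g (fun i => lN l (v i)) = lM l (g v)) ∧
    (∀ (v : Fin n → N) (r : R), g (fun i => rN (v i) r) = rM (g v) r) ∧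
    ∀ m : M, g (f m) = m

def BSim {M N : Type} [AddCommGroup M] [AddCommGroup N]
    (lM : L → M → M) (rM : M → R → M) (lN : L → N → N) (rN : N → R → N) : Prop :=
  BDiv L R lM rM lN rN ∧ BDiv L R lN rN lM rM

end Bimod

section Ext

variable {R S : Type} [Ring R] [Ring S] (ψ : R →+* S)

def rdualSub : AddSubgroup (S →+ R) where
  carrier := {h | ∀ (x : S) (r : R), h (x * ψ r) = h x * r}
  add_mem' := by
    intro a b ha hb
    intro x r
    simp only [AddMonoidHom.add_apply, ha x r, hb x r, add_mul]
  zero_mem' := by intro x r; simp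
  neg_mem' := by
    intro a ha x r
    simp only [AddMonoidHom.neg_apply, ha x r, neg_mul]

def ldualSub : AddSubgroup (S →+ R) where
  carrier := {h | ∀ (r : R) (x : S), h (ψ r * x) = r * h x}
  add_mem' := by
    intro a b ha hb r x
    simp only [AddMonoidHom.add_apply, ha r x, hb r x, mul_add]
  zero_mem' := by intro r x; simp
  neg_mem' := by
    intro a ha r x
    simp only [AddMonoidHom.neg_apply, ha r x, mul_neg]

def rdualL (r : R) (h : rdualSub ψ) : rdualSub ψ :=
  ⟨(AddMonoidHom.mulLeft r).comp h.1, by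
    intro x r'
    simp only [AddMonoidHom.coe_comp, Function.comp_apply, AddMonoidHom.coe_mulLeft,
      h.2 x r', mul_assoc]⟩

def rdualR (h : rdualSub ψ) (s : S) : rdualSub ψ :=
  ⟨h.1.comp (AddMonoidHom.mulLeft s), by
    intro x r'
    simp only [AddMonoidHom.coe_comp, Function.comp_apply, AddMonoidHom.coe_mulLeft,
      ← mul_assoc]
    exact h.2 (s * x) r'⟩

def ldualL (s : S) (h : ldualSub ψ) : ldualSub ψ :=
  ⟨h.1.comp (AddMonoidHom.mulRight s), by
    intro r x
    simp only [AddMonoidHom.coe_comp, Function.comp_apply, AddMonoidHom.coe_mulRight,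
      mul_assoc]
    exact h.2 r (x * s)⟩

def ldualR (h : ldualSub ψ) (r : R) : ldualSub ψ :=
  ⟨(AddMonoidHom.mulRight r).comp h.1, by
    intro r' x
    simp only [AddMonoidHom.coe_comp, Function.comp_apply, AddMonoidHom.coe_mulRight,
      h.2 r' x, mul_assoc]⟩

def tensorRel : AddSubgroup (S ⊗[ℤ] S) :=
  AddSubgroup.closure {z | ∃ (x y : S) (r : R),
    z = (x * ψ r) ⊗ₜ[ℤ] y - x ⊗ₜ[ℤ] (ψ r * y)}

def TensorSq := (S ⊗[ℤ] S) ⧸ tensorRel ψ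

instance : AddCommGroup (TensorSq ψ) := QuotientAddGroup.Quotient.addCommGroup _

def tmk (x y : S) : TensorSq ψ := QuotientAddGroup.mk (x ⊗ₜ[ℤ] y)

def tL (a : S) : TensorSq ψ →+ TensorSq ψ :=
  QuotientAddGroup.map _ _
    ((TensorProduct.map (AddMonoidHom.mulLeft a).toIntLinearMap LinearMap.id).toAddMonoidHom)
    (by
      show tensorRel ψ ≤ AddSubgroup.comap _ (tensorRel ψ)
      rw [tensorRel, AddSubgroup.closure_le]
      rintro z ⟨x, y, r, rfl⟩
      simp only [SetLike.mem_coe, AddSubgroup.mem_comap, LinearMap.toAddMonoidHom_coe,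
        map_sub, TensorProduct.map_tmul, AddMonoidHom.coe_toIntLinearMap,
        AddMonoidHom.coe_mulLeft, LinearMap.id_coe, id_eq]
      exact AddSubgroup.subset_closure ⟨a * x, y, r, by rw [mul_assoc]⟩)

def tR (a : S) : TensorSq ψ →+ TensorSq ψ :=
  QuotientAddGroup.map _ _
    ((TensorProduct.map LinearMap.id (AddMonoidHom.mulRight a).toIntLinearMap).toAddMonoidHom)
    (by
      show tensorRel ψ ≤ AddSubgroup.comap _ (tensorRel ψ)
      rw [tensorRel, AddSubgroup.closure_le]
      rintro z ⟨x, y, r, rfl⟩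
      simp only [SetLike.mem_coe, AddSubgroup.mem_comap, LinearMap.toAddMonoidHom_coe,
        map_sub, TensorProduct.map_tmul, AddMonoidHom.coe_toIntLinearMap,
        AddMonoidHom.coe_mulRight, LinearMap.id_coe, id_eq]
      exact AddSubgroup.subset_closure ⟨x, y * a, r, by rw [mul_assoc]⟩)

/-- The multiplication map `S ⊗_R S → S`, `x ⊗ y ↦ x * y`. -/
def tmul' : TensorSq ψ →+ S :=
  QuotientAddGroup.lift _ (LinearMap.mul' ℤ S).toAddMonoidHom
    (by
      intro z hz
      induction hz using AddSubgroup.closure_induction with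
      | mem z hz =>
        obtain ⟨x, y, r, rfl⟩ := hz
        simp [mul_assoc]
      | zero => simp
      | add a b _ _ ha hb =>
        simp only [AddMonoidHom.mem_ker, LinearMap.toAddMonoidHom_coe] at ha hb ⊢
        simp [map_add, ha, hb]
      | neg a _ ha =>
        simp only [AddMonoidHom.mem_ker, LinearMap.toAddMonoidHom_coe] at ha ⊢
        simp [ha])

end Ext


section ExtEnd

variable {R S : Type} [Ring R] [Ring S] (ψ : R →+* S)

/-- `End(S_R)`: additive endomorphisms of `S` commuting with the right `R`-action
(along `ψ`), as a subring of `AddMonoid.End S`. -/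
def endR : Subring (AddMonoid.End S) where
  carrier := {e | ∀ (x : S) (r : R), e (x * ψ r) = e x * ψ r}
  mul_mem' := by
    intro a b ha hb x r
    show a (b (x * ψ r)) = a (b x) * ψ r
    rw [hb, ha]
  one_mem' := by intro x r; rfl
  add_mem' := by
    intro a b ha hb x r
    show a (x * ψ r) + b (x * ψ r) = (a x + b x) * ψ r
    rw [ha, hb, add_mul]
  zero_mem' := by
    intro x r
    show (0 : S) = 0 * ψ r
    rw [zero_mul]
  neg_mem' := by
    intro a ha x r
    show -(a (x * ψ r)) = -(a x) * ψ r
    rw [ha, neg_mul]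

/-- `End(_RS)`: additive endomorphisms of `S` commuting with the left `R`-action
(along `ψ`), as a subring of `AddMonoid.End S`. -/
def endL : Subring (AddMonoid.End S) where
  carrier := {e | ∀ (r : R) (x : S), e (ψ r * x) = ψ r * e x}
  mul_mem' := by
    intro a b ha hb r x
    show a (b (ψ r * x)) = ψ r * a (b x)
    rw [hb, ha]
  one_mem' := by intro r x; rfl
  add_mem' := by
    intro a b ha hb r x
    show a (ψ r * x) + b (ψ r * x) = ψ r * (a x + b x)
    rw [ha, hb, mul_add]
  zero_mem' := by
    intro r x
    show (0 : S) = ψ r * 0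
    rw [mul_zero]
  neg_mem' := by
    intro a ha r x
    show -(a (ψ r * x)) = ψ r * -(a x)
    rw [ha, mul_neg]

/-- The left regular representation `λ : S → End(S_R)`, `s ↦ (x ↦ s * x)`. -/
def lam : S →+* endR ψ where
  toFun s := ⟨(AddMonoidHom.mulLeft s : S →+ S), by
    intro x r
    show s * (x * ψ r) = s * x * ψ r
    rw [mul_assoc]⟩
  map_one' := by
    apply Subtype.ext
    refine AddMonoidHom.ext fun x => ?_
    show (1 : S) * x = x
    rw [one_mul]
  map_mul' s t := by
    apply Subtype.ext
    refine AddMonoidHom.ext fun x => ?_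
    show (s * t) * x = s * (t * x)
    rw [mul_assoc]
  map_zero' := by
    apply Subtype.ext
    refine AddMonoidHom.ext fun x => ?_
    show (0 : S) * x = 0
    rw [zero_mul]
  map_add' s t := by
    apply Subtype.ext
    refine AddMonoidHom.ext fun x => ?_
    show (s + t) * x = s * x + t * x
    rw [add_mul]

/-- Right multiplication `ρ : S → End(_RS)`, `s ↦ (x ↦ x * s)`. -/
def rho (s : S) : endL ψ :=
  ⟨(AddMonoidHom.mulRight s : S →+ S), by
    intro r x
    show (ψ r * x) * s = ψ r * (x * s)
    rw [mul_assoc]⟩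

/-- Left `S`-action on `End(_RS)`: `(x · f)(z) = f (z * x)`. -/
def endLL (x : S) (f : endL ψ) : endL ψ :=
  ⟨(f.1 : S →+ S).comp (AddMonoidHom.mulRight x), by
    intro r z
    show (f.1 : S →+ S) ((ψ r * z) * x) = ψ r * (f.1 : S →+ S) (z * x)
    rw [mul_assoc]
    exact f.2 r (z * x)⟩

/-- Right `S`-action on `End(_RS)`: `(f · y)(z) = f z * y`. -/
def endLR (f : endL ψ) (y : S) : endL ψ :=
  ⟨(AddMonoidHom.mulRight y).comp (f.1 : S →+ S), by
    intro r z
    show (f.1 : S →+ S) (ψ r * z) * y = ψ r * ((f.1 : S →+ S) z * y)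
    rw [f.2 r z, mul_assoc]⟩

end ExtEnd

section QF

variable {B A : Type} [Ring B] [Ring A] (φ : B →+* A)

/-- `φ : B → A` is a left QF-extension: `_B A` is finitely generated projective and `A`
divides `(_B A)* = Hom_{B-}(A,B)` as `(A,B)`-bimodules. -/
def IsLeftQF : Prop :=
  (letI : Module B A := Module.compHom A φ
   Module.Finite B A ∧ Module.Projective B A) ∧
  BDiv A B (fun a x => a * x) (fun x b => x * φ b) (ldualL φ) (ldualR φ)

/-- `φ : B → A` is a right QF-extension: `A_B` is finitely generated projective and `A`
divides `(A_B)* = Hom_{-B}(A,B)` as `(B,A)`-bimodules. -/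
def IsRightQF : Prop :=
  (letI : Module Bᵐᵒᵖ A := Module.compHom A φ.op
   Module.Finite Bᵐᵒᵖ A ∧ Module.Projective Bᵐᵒᵖ A) ∧
  BDiv B A (fun b x => φ b * x) (fun x a => x * a) (rdualL φ) (rdualR φ)

/-- `φ : B → A` is a QF extension: both a left and a right QF extension. -/
def IsQFExt : Prop := IsLeftQF φ ∧ IsRightQF φ

end QF


section Helpers

variable {B A : Type} [Ring B] [Ring A] {φ : B →+* A}

@[simp] lemma ldualL_apply (a : A) (h : ldualSub φ) (z : A) :
    (ldualL φ a h).1 z = h.1 (z * a) := rfl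
@[simp] lemma ldualR_apply (h : ldualSub φ) (b : B) (z : A) :
    (ldualR φ h b).1 z = h.1 z * b := rfl
@[simp] lemma rdualL_apply (b : B) (h : rdualSub φ) (z : A) :
    (rdualL φ b h).1 z = b * h.1 z := rfl
@[simp] lemma rdualR_apply (h : rdualSub φ) (a : A) (z : A) :
    (rdualR φ h a).1 z = h.1 (a * z) := rfl

lemma ldual_ext {h k : ldualSub φ} (H : ∀ z, h.1 z = k.1 z) : h = k :=
  Subtype.ext (AddMonoidHom.ext H)
lemma rdual_ext {h k : rdualSub φ} (H : ∀ z, h.1 z = k.1 z) : h = k :=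
  Subtype.ext (AddMonoidHom.ext H)

@[simp] lemma ldual_zero_apply (z : A) : ((0 : ldualSub φ)).1 z = 0 := rfl
@[simp] lemma rdual_zero_apply (z : A) : ((0 : rdualSub φ)).1 z = 0 := rfl
@[simp] lemma ldual_add_apply (h k : ldualSub φ) (z : A) : (h + k).1 z = h.1 z + k.1 z := rfl
@[simp] lemma rdual_add_apply (h k : rdualSub φ) (z : A) : (h + k).1 z = h.1 z + k.1 z := rfl

/-- evaluation at a point as an additive hom -/
def ldualEv (z : A) : ldualSub φ →+ B :=
  AddMonoidHom.mk' (fun h => h.1 z) (fun _ _ => rfl)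
def rdualEv (z : A) : rdualSub φ →+ B :=
  AddMonoidHom.mk' (fun h => h.1 z) (fun _ _ => rfl)

lemma ldual_sum_apply {ι : Type*} (s : Finset ι) (h : ι → ldualSub φ) (z : A) :
    (∑ i ∈ s, h i).1 z = ∑ i ∈ s, (h i).1 z :=
  map_sum (ldualEv z) h s
lemma rdual_sum_apply {ι : Type*} (s : Finset ι) (h : ι → rdualSub φ) (z : A) :
    (∑ i ∈ s, h i).1 z = ∑ i ∈ s, (h i).1 z :=
  map_sum (rdualEv z) h s

@[simp] lemma ldualR_zero (b : B) : ldualR φ (0 : ldualSub φ) b = 0 :=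
  ldual_ext fun _ => zero_mul b
@[simp] lemma ldualL_zero (a : A) : ldualL φ a (0 : ldualSub φ) = 0 :=
  ldual_ext fun _ => rfl
@[simp] lemma rdualL_zero (b : B) : rdualL φ b (0 : rdualSub φ) = 0 :=
  rdual_ext fun _ => mul_zero b
@[simp] lemma rdualR_zero (a : A) : rdualR φ (0 : rdualSub φ) a = 0 :=
  rdual_ext fun _ => rfl

lemma single_ldualR {n : ℕ} (k j : Fin n) (h : ldualSub φ) (b : B) :
    (Pi.single k (ldualR φ h b) : Fin n → ldualSub φ) j
      = ldualR φ ((Pi.single k h : Fin n → ldualSub φ) j) b := by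
  rcases eq_or_ne j k with rfl | hne
  · simp
  · simp [Pi.single_eq_of_ne hne]

lemma single_rdualL {n : ℕ} (k j : Fin n) (b : B) (h : rdualSub φ) :
    (Pi.single k (rdualL φ b h) : Fin n → rdualSub φ) j
      = rdualL φ b ((Pi.single k h : Fin n → rdualSub φ) j) := by
  rcases eq_or_ne j k with rfl | hne
  · simp
  · simp [Pi.single_eq_of_ne hne]

lemma single_rdualR {n : ℕ} (k j : Fin n) (h : rdualSub φ) (a : A) :
    (Pi.single k (rdualR φ h a) : Fin n → rdualSub φ) j
      = rdualR φ ((Pi.single k h : Fin n → rdualSub φ) j) a := by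
  rcases eq_or_ne j k with rfl | hne
  · simp
  · simp [Pi.single_eq_of_ne hne]

lemma single_mul_left {n : ℕ} (k j : Fin n) (a z : A) :
    (Pi.single k (a * z) : Fin n → A) j = a * (Pi.single k z : Fin n → A) j := by
  rcases eq_or_ne j k with rfl | hne
  · simp
  · simp [Pi.single_eq_of_ne hne]

lemma single_mul_right {n : ℕ} (k j : Fin n) (z a : A) :
    (Pi.single k (z * a) : Fin n → A) j = (Pi.single k z : Fin n → A) j * a := by
  rcases eq_or_ne j k with rfl | hne
  · simp
  · simp [Pi.single_eq_of_ne hne]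

lemma single_sum {n : ℕ} {M : Type} [AddCommMonoid M] (i : Fin n) {ι : Type*}
    (s : Finset ι) (c : ι → M) :
    (Pi.single i (∑ k ∈ s, c k) : Fin n → M) = ∑ k ∈ s, (Pi.single i (c k) : Fin n → M) :=
  map_sum (AddMonoidHom.single (fun _ : Fin n => M) i) c s

lemma ldual_expand {m : ℕ} {x : Fin m → A} {fB : Fin m → ldualSub φ}
    (hdb : ∀ z, ∑ i, φ ((fB i).1 z) * x i = z) (h : ldualSub φ) :
    h = ∑ i, ldualR φ (fB i) (h.1 (x i)) := by
  apply ldual_ext; intro z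
  rw [ldual_sum_apply]
  simp only [ldualR_apply]
  calc h.1 z = h.1 (∑ i, φ ((fB i).1 z) * x i) := by rw [hdb]
    _ = ∑ i, (fB i).1 z * h.1 (x i) := by
        rw [map_sum]; exact Finset.sum_congr rfl fun i _ => h.2 _ _

lemma rdual_expand {m : ℕ} {y : Fin m → A} {gB : Fin m → rdualSub φ}
    (hdb : ∀ z, ∑ j, y j * φ ((gB j).1 z) = z) (t : rdualSub φ) :
    t = ∑ j, rdualL φ (t.1 (y j)) (gB j) := by
  apply rdual_ext; intro z
  rw [rdual_sum_apply]
  simp only [rdualL_apply]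
  calc t.1 z = t.1 (∑ j, y j * φ ((gB j).1 z)) := by rw [hdb]
    _ = ∑ j, t.1 (y j) * (gB j).1 z := by
        rw [map_sum]; exact Finset.sum_congr rfl fun j _ => t.2 _ _

theorem fgp_iff_dualBasis (R M : Type) [Ring R] [AddCommGroup M] [Module R M] :
    (Module.Finite R M ∧ Module.Projective R M) ↔
    ∃ (n : ℕ) (x : Fin n → M) (f : Fin n → (M →ₗ[R] R)), ∀ z, ∑ i, f i z • x i = z := by
  constructor
  · rintro ⟨hF, hP⟩
    obtain ⟨n, f, g, -, -, hfg⟩ := Module.Finite.exists_comp_eq_id_of_projective R M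
    refine ⟨n, fun i => f (Pi.single i 1), fun i => (LinearMap.proj i).comp g, fun z => ?_⟩
    have : ∑ i, (g z i) • f (Pi.single i 1) = f (∑ i, Pi.single i (g z i)) := by
      rw [map_sum]
      congr 1
      ext i
      rw [← map_smul, ← Pi.single_smul, smul_eq_mul, mul_one]
    simpa [this, Finset.univ_sum_single] using congrFun (congrArg (fun h => h.toFun) hfg) z
  · rintro ⟨n, x, f, h⟩
    set π : (Fin n → R) →ₗ[R] M := ∑ i, LinearMap.smulRight (LinearMap.proj i) (x i) with hpi
    set σ : M →ₗ[R] (Fin n → R) := LinearMap.pi f with hsig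
    have hcomp : π.comp σ = LinearMap.id := by
      ext z
      simp [hpi, hsig, LinearMap.sum_apply, h z]
    have hsurj : Function.Surjective π :=
      fun z => ⟨σ z, congrFun (congrArg (fun h => h.toFun) hcomp) z⟩
    exact ⟨Module.Finite.of_surjective π hsurj, Module.Projective.of_split σ π hcomp⟩

variable (φ)

theorem left_fgp_iff :
    (letI : Module B A := Module.compHom A φ
     Module.Finite B A ∧ Module.Projective B A) ↔
    ∃ (n : ℕ) (x : Fin n → A) (f : Fin n → ldualSub φ), ∀ z, ∑ i, φ ((f i).1 z) * x i = z := by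
  letI : Module B A := Module.compHom A φ
  show (Module.Finite B A ∧ Module.Projective B A) ↔ _
  rw [fgp_iff_dualBasis]
  constructor
  · rintro ⟨n, x, f, hf⟩
    exact ⟨n, x, fun i => ⟨(f i).toAddMonoidHom, fun r z => (f i).map_smul r z⟩, hf⟩
  · rintro ⟨n, x, f, hf⟩
    exact ⟨n, x, fun i =>
      { toFun := (f i).1, map_add' := (f i).1.map_add, map_smul' := fun r z => (f i).2 r z }, hf⟩

theorem right_fgp_iff :
    (letI : Module Bᵐᵒᵖ A := Module.compHom A φ.op
     Module.Finite Bᵐᵒᵖ A ∧ Module.Projective Bᵐᵒᵖ A) ↔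
    ∃ (n : ℕ) (y : Fin n → A) (g : Fin n → rdualSub φ),
      ∀ z, ∑ j, y j * φ ((g j).1 z) = z := by
  letI : Module Bᵐᵒᵖ A := Module.compHom A φ.op
  show (Module.Finite Bᵐᵒᵖ A ∧ Module.Projective Bᵐᵒᵖ A) ↔ _
  rw [fgp_iff_dualBasis]
  constructor
  · rintro ⟨n, x, f, hf⟩
    refine ⟨n, x, fun i =>
      ⟨AddMonoidHom.mk' (fun z => (f i z).unop)
        (fun a b => congrArg MulOpposite.unop (map_add (f i) a b)),
       fun z r => congrArg MulOpposite.unop ((f i).map_smul (MulOpposite.op r) z)⟩, hf⟩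
  · rintro ⟨n, y, g, hf⟩
    exact ⟨n, y, fun j =>
      { toFun := fun z => MulOpposite.op ((g j).1 z),
        map_add' := fun a b => congrArg MulOpposite.op (map_add _ a b),
        map_smul' := fun c z => congrArg MulOpposite.op ((g j).2 z c.unop) }, hf⟩

theorem qf_fwd {m : ℕ} (y : Fin m → A) (gB : Fin m → rdualSub φ)
    (hdb : ∀ z, ∑ j, y j * φ ((gB j).1 z) = z)
    (h : BDiv B A (fun b x => φ b * x) (fun x a => x * a) (rdualL φ) (rdualR φ)) :
    BDiv A B (ldualL φ) (ldualR φ) (fun a x => a * x) (fun x b => x * φ b) := by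
  obtain ⟨n, f, g, hfL, hfR, hgL, hgR, hgf⟩ := h
  have hfL' : ∀ (b : B) (z : A), f (φ b * z) = fun i => rdualL φ b (f z i) := hfL
  have hfR' : ∀ (z a : A), f (z * a) = fun i => rdualR φ (f z i) a := hfR
  have hgL' : ∀ (b : B) (v : Fin n → rdualSub φ), g (fun i => rdualL φ b (v i)) = φ b * g v := hgL
  have hgR' : ∀ (v : Fin n → rdualSub φ) (a : A), g (fun i => rdualR φ (v i) a) = g v * a := hgR
  refine ⟨n,
    AddMonoidHom.mk' (fun h => fun i => ∑ j, y j * φ (h.1 (g (Pi.single i (gB j)))))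
      (fun h k => ?_),
    AddMonoidHom.mk' (fun v => (⟨AddMonoidHom.mk'
        (fun z => ∑ i, (f z i).1 (v i)) (fun z w => ?_), fun r z => ?_⟩ : ldualSub φ))
      (fun v w => ?_),
    fun a h => ?_, fun h b => ?_, fun a v => ?_, fun v b => ?_, fun h => ?_⟩
  · -- F additive
    funext i
    simp [mul_add, Finset.sum_add_distrib]
  · -- inner additive in z
    show ∑ i, (f (z + w) i).1 (v i) = (∑ i, (f z i).1 (v i)) + ∑ i, (f w i).1 (v i)
    rw [map_add f]
    simp [Finset.sum_add_distrib]
  · -- membership in ldualSub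
    show ∑ i, (f (φ r * z) i).1 (v i) = r * ∑ i, (f z i).1 (v i)
    rw [hfL' r z]
    simp [Finset.mul_sum]
  · -- G additive in v
    apply ldual_ext; intro z
    simp [Finset.sum_add_distrib]
  · -- F (ldualL a h) = a • F h
    funext i
    show ∑ j, y j * φ (h.1 (g (Pi.single i (gB j)) * a))
      = a * ∑ j, y j * φ (h.1 (g (Pi.single i (gB j))))
    have key : ∀ j, h.1 (g (Pi.single i (gB j)) * a)
        = ∑ k, (gB j).1 (a * y k) * h.1 (g (Pi.single i (gB k))) := by
      intro j
      have e1 : g (Pi.single i (gB j)) * a = g (Pi.single i (rdualR φ (gB j) a)) := by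
        rw [← hgR']
        congr 1
        funext k
        exact (single_rdualR i k (gB j) a).symm
      have e2 : (Pi.single i (rdualR φ (gB j) a) : Fin n → rdualSub φ)
          = ∑ k, Pi.single i (rdualL φ ((gB j).1 (a * y k)) (gB k)) := by
        rw [← single_sum]
        congr 1
        simpa using rdual_expand hdb (rdualR φ (gB j) a)
      rw [e1, e2, map_sum, map_sum]
      refine Finset.sum_congr rfl fun k _ => ?_
      have e3 : g (Pi.single i (rdualL φ ((gB j).1 (a * y k)) (gB k)))
          = φ ((gB j).1 (a * y k)) * g (Pi.single i (gB k)) := by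
        rw [← hgL']
        congr 1
        funext l
        exact single_rdualL i l _ (gB k)
      rw [e3, h.2]
    calc ∑ j, y j * φ (h.1 (g (Pi.single i (gB j)) * a))
        = ∑ j, ∑ k, y j * (φ ((gB j).1 (a * y k)) * φ (h.1 (g (Pi.single i (gB k))))) := by
          refine Finset.sum_congr rfl fun j _ => ?_
          rw [key j, map_sum, Finset.mul_sum]
          exact Finset.sum_congr rfl fun k _ => by rw [map_mul]
      _ = ∑ k, (∑ j, y j * φ ((gB j).1 (a * y k))) * φ (h.1 (g (Pi.single i (gB k)))) := by
          rw [Finset.sum_comm]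
          refine Finset.sum_congr rfl fun k _ => ?_
          rw [Finset.sum_mul]
          exact Finset.sum_congr rfl fun j _ => (mul_assoc _ _ _).symm
      _ = ∑ k, (a * y k) * φ (h.1 (g (Pi.single i (gB k)))) := by
          refine Finset.sum_congr rfl fun k _ => ?_
          rw [hdb (a * y k)]
      _ = a * ∑ j, y j * φ (h.1 (g (Pi.single i (gB j)))) := by
          rw [Finset.mul_sum]
          exact Finset.sum_congr rfl fun k _ => mul_assoc _ _ _
  · -- F (ldualR h b) = F h * φ b
    funext i
    show ∑ j, y j * φ (h.1 (g (Pi.single i (gB j))) * b)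
      = (∑ j, y j * φ (h.1 (g (Pi.single i (gB j))))) * φ b
    rw [Finset.sum_mul]
    exact Finset.sum_congr rfl fun j _ => by rw [map_mul, mul_assoc]
  · -- G (a • v) = ldualL a (G v)
    apply ldual_ext; intro z
    show ∑ i, (f z i).1 (a * v i) = ∑ i, (f (z * a) i).1 (v i)
    rw [hfR' z a]
    rfl
  · -- G (v * φ b) = ldualR (G v) b
    apply ldual_ext; intro z
    show ∑ i, (f z i).1 (v i * φ b) = (∑ i, (f z i).1 (v i)) * b
    rw [Finset.sum_mul]
    exact Finset.sum_congr rfl fun i _ => (f z i).2 (v i) b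
  · -- G (F h) = h
    apply ldual_ext; intro z
    show ∑ i, (f z i).1 (∑ j, y j * φ (h.1 (g (Pi.single i (gB j))))) = h.1 z
    calc ∑ i, (f z i).1 (∑ j, y j * φ (h.1 (g (Pi.single i (gB j)))))
        = ∑ i, ∑ j, h.1 (g (Pi.single i (rdualL φ ((f z i).1 (y j)) (gB j)))) := by
          refine Finset.sum_congr rfl fun i _ => ?_
          rw [map_sum]
          refine Finset.sum_congr rfl fun j _ => ?_
          rw [(f z i).2 (y j), ← h.2]
          congr 1
          rw [← hgL']
          congr 1
          funext l
          exact (single_rdualL i l _ (gB j)).symm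
      _ = ∑ i, h.1 (g (Pi.single i (f z i))) := by
          refine Finset.sum_congr rfl fun i _ => ?_
          rw [← map_sum, ← map_sum, ← single_sum, ← rdual_expand hdb (f z i)]
      _ = h.1 z := by
          rw [← map_sum, ← map_sum]
          congr 1
          rw [Finset.univ_sum_single, hgf]

theorem qf_bwdA {m : ℕ} (x : Fin m → A) (fB : Fin m → ldualSub φ)
    (hdb : ∀ z, ∑ i, φ ((fB i).1 z) * x i = z)
    (h : BDiv A B (fun a x => a * x) (fun x b => x * φ b) (ldualL φ) (ldualR φ)) :
    ∃ (N : ℕ) (y : Fin N → A) (g : Fin N → rdualSub φ),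
      ∀ z, ∑ j, y j * φ ((g j).1 z) = z := by
  obtain ⟨n, F, G, hFL, hFR, hGL, hGR, hGF⟩ := h
  have hFR' : ∀ (z : A) (b : B), F (z * φ b) = fun k => ldualR φ (F z k) b := hFR
  have hGR' : ∀ (v : Fin n → ldualSub φ) (b : B),
      G (fun k => ldualR φ (v k) b) = G v * φ b := hGR
  let e : Fin n × Fin m ≃ Fin (n * m) := finProdFinEquiv
  refine ⟨n * m, fun p => G (Pi.single (e.symm p).1 (fB (e.symm p).2)),
    fun p => ⟨AddMonoidHom.mk' (fun z => (F z (e.symm p).1).1 (x (e.symm p).2))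
      (fun z w => by
        show (F (z + w) (e.symm p).1).1 (x (e.symm p).2)
          = (F z (e.symm p).1).1 (x (e.symm p).2) + (F w (e.symm p).1).1 (x (e.symm p).2)
        rw [map_add F]
        rfl),
      fun z b => by
        show (F (z * φ b) (e.symm p).1).1 (x (e.symm p).2)
          = (F z (e.symm p).1).1 (x (e.symm p).2) * b
        rw [hFR' z b]
        rfl⟩, fun z => ?_⟩
  show ∑ p : Fin (n * m), G (Pi.single (e.symm p).1 (fB (e.symm p).2)) *
      φ ((F z (e.symm p).1).1 (x (e.symm p).2)) = z
  rw [Fintype.sum_bijective e.symm e.symm.bijective _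
      (fun q : Fin n × Fin m => G (Pi.single q.1 (fB q.2)) * φ ((F z q.1).1 (x q.2)))
      (fun p => rfl)]
  rw [Fintype.sum_prod_type]
  calc ∑ k : Fin n, ∑ i : Fin m, G (Pi.single k (fB i)) * φ ((F z k).1 (x i))
      = ∑ k : Fin n, G (Pi.single k (F z k)) := by
        refine Finset.sum_congr rfl fun k _ => ?_
        have e1 : ∀ i : Fin m, G (Pi.single k (fB i)) * φ ((F z k).1 (x i))
            = G (Pi.single k (ldualR φ (fB i) ((F z k).1 (x i)))) := by
          intro i
          rw [← hGR']
          congr 1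
          funext l
          exact (single_ldualR k l (fB i) _).symm
        rw [Finset.sum_congr rfl fun i _ => e1 i, ← map_sum, ← single_sum,
          ← ldual_expand hdb (F z k)]
    _ = z := by
        rw [← map_sum, Finset.univ_sum_single, hGF]

theorem qf_bwdB {m : ℕ} (x : Fin m → A) (fB : Fin m → ldualSub φ)
    (hdb : ∀ z, ∑ i, φ ((fB i).1 z) * x i = z)
    (h : BDiv A B (ldualL φ) (ldualR φ) (fun a x => a * x) (fun x b => x * φ b)) :
    BDiv B A (fun b x => φ b * x) (fun x a => x * a) (rdualL φ) (rdualR φ) := by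
  obtain ⟨n, F, G, hFL, hFR, hGL, hGR, hGF⟩ := h
  have hFL' : ∀ (a : A) (k : ldualSub φ), F (ldualL φ a k) = fun j => a * F k j := hFL
  have hFR' : ∀ (k : ldualSub φ) (b : B), F (ldualR φ k b) = fun j => F k j * φ b := hFR
  have hGL' : ∀ (a : A) (v : Fin n → A), G (fun k => a * v k) = ldualL φ a (G v) := hGL
  have hGR' : ∀ (v : Fin n → A) (b : B), G (fun k => v k * φ b) = ldualR φ (G v) b := hGR
  refine ⟨n,
    AddMonoidHom.mk' (fun a => fun k => (⟨AddMonoidHom.mk'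
        (fun z => (G (Pi.single k z)).1 a)
        (fun z w => by
          show (G (Pi.single k (z + w))).1 a = (G (Pi.single k z)).1 a + (G (Pi.single k w)).1 a
          rw [Pi.single_add, map_add]
          rfl),
      fun z b => ?_⟩ : rdualSub φ)) (fun a a' => ?_),
    AddMonoidHom.mk' (fun v => ∑ i, ∑ k, φ ((v k).1 (F (fB i) k)) * x i) (fun v w => ?_),
    fun b a => ?_, fun a a' => ?_, fun b v => ?_, fun v a => ?_, fun a => ?_⟩
  · -- membership in rdualSub
    show (G (Pi.single k (z * φ b))).1 a = (G (Pi.single k z)).1 a * b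
    have e1 : (Pi.single k (z * φ b) : Fin n → A) = fun j => (Pi.single k z : Fin n → A) j * φ b :=
      funext fun j => single_mul_right k j z (φ b)
    rw [e1, hGR']
    rfl
  · -- f'' additive in a
    funext k
    apply rdual_ext; intro z
    exact map_add ((G (Pi.single k z)).1) a a'
  · -- g'' additive in v
    rw [← Finset.sum_add_distrib]
    refine Finset.sum_congr rfl fun i _ => ?_
    rw [← Finset.sum_add_distrib]
    refine Finset.sum_congr rfl fun k _ => ?_
    show φ (((v k) + (w k)).1 (F (fB i) k)) * x i = _
    rw [rdual_add_apply, map_add, add_mul]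
  · -- f'' (φ b * a) = rdualL b ∘ f'' a
    funext k
    apply rdual_ext; intro z
    exact (G (Pi.single k z)).2 b a
  · -- f'' (a * a') = rdualR (f'' a) a'
    funext k
    apply rdual_ext; intro z
    show (G (Pi.single k z)).1 (a * a') = (G (Pi.single k (a' * z))).1 a
    have e1 : (Pi.single k (a' * z) : Fin n → A) = fun j => a' * (Pi.single k z : Fin n → A) j :=
      funext fun j => single_mul_left k j a' z
    rw [e1, hGL']
    rfl
  · -- g'' (rdualL b ∘ v) = φ b * g'' v
    show ∑ i, ∑ k, φ ((rdualL φ b (v k)).1 (F (fB i) k)) * x i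
      = φ b * ∑ i, ∑ k, φ ((v k).1 (F (fB i) k)) * x i
    rw [Finset.mul_sum]
    refine Finset.sum_congr rfl fun i _ => ?_
    rw [Finset.mul_sum]
    refine Finset.sum_congr rfl fun k _ => ?_
    show φ ((rdualL φ b (v k)).1 (F (fB i) k)) * x i = _
    rw [rdualL_apply, map_mul, mul_assoc]
  · -- g'' (rdualR ∘ v a) = g'' v * a
    show ∑ i, ∑ k, φ ((rdualR φ (v k) a).1 (F (fB i) k)) * x i
      = (∑ i, ∑ k, φ ((v k).1 (F (fB i) k)) * x i) * a
    have key : ∀ (i : Fin m) (k : Fin n), (v k).1 (a * F (fB i) k)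
        = ∑ j, (v k).1 (F (fB j) k) * (fB i).1 (x j * a) := by
      intro i k
      have e1 : a * F (fB i) k = F (ldualL φ a (fB i)) k := by rw [hFL']
      have e2 : ldualL φ a (fB i) = ∑ j, ldualR φ (fB j) ((fB i).1 (x j * a)) := by
        simpa using ldual_expand hdb (ldualL φ a (fB i))
      have e3 : F (ldualL φ a (fB i)) k = ∑ j, F (fB j) k * φ ((fB i).1 (x j * a)) := by
        rw [e2, map_sum, Finset.sum_apply]
        exact Finset.sum_congr rfl fun j _ => by rw [hFR']
      rw [e1, e3, map_sum]
      exact Finset.sum_congr rfl fun j _ => (v k).2 _ _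
    calc ∑ i, ∑ k, φ ((rdualR φ (v k) a).1 (F (fB i) k)) * x i
        = ∑ i, ∑ k, ∑ j, φ ((v k).1 (F (fB j) k)) * (φ ((fB i).1 (x j * a)) * x i) := by
          refine Finset.sum_congr rfl fun i _ => Finset.sum_congr rfl fun k _ => ?_
          rw [rdualR_apply, key i k, map_sum, Finset.sum_mul]
          exact Finset.sum_congr rfl fun j _ => by rw [map_mul, mul_assoc]
      _ = ∑ i, ∑ j, ∑ k, φ ((v k).1 (F (fB j) k)) * (φ ((fB i).1 (x j * a)) * x i) :=
          Finset.sum_congr rfl fun i _ => Finset.sum_comm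
      _ = ∑ j, ∑ i, ∑ k, φ ((v k).1 (F (fB j) k)) * (φ ((fB i).1 (x j * a)) * x i) :=
          Finset.sum_comm
      _ = ∑ j, ∑ k, ∑ i, φ ((v k).1 (F (fB j) k)) * (φ ((fB i).1 (x j * a)) * x i) :=
          Finset.sum_congr rfl fun j _ => Finset.sum_comm
      _ = ∑ j, ∑ k, φ ((v k).1 (F (fB j) k)) * (∑ i, φ ((fB i).1 (x j * a)) * x i) :=
          Finset.sum_congr rfl fun j _ => Finset.sum_congr rfl fun k _ =>
            (Finset.mul_sum _ _ _).symm
      _ = ∑ j, ∑ k, φ ((v k).1 (F (fB j) k)) * (x j * a) := by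
          refine Finset.sum_congr rfl fun j _ => Finset.sum_congr rfl fun k _ => ?_
          rw [hdb (x j * a)]
      _ = (∑ i, ∑ k, φ ((v k).1 (F (fB i) k)) * x i) * a := by
          rw [Finset.sum_mul]
          refine Finset.sum_congr rfl fun j _ => ?_
          rw [Finset.sum_mul]
          exact Finset.sum_congr rfl fun k _ => (mul_assoc _ _ _).symm
  · -- g'' (f'' a) = a
    show ∑ i, ∑ k, φ ((G (Pi.single k (F (fB i) k))).1 a) * x i = a
    calc ∑ i, ∑ k, φ ((G (Pi.single k (F (fB i) k))).1 a) * x i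
        = ∑ i, φ ((fB i).1 a) * x i := by
          refine Finset.sum_congr rfl fun i _ => ?_
          rw [← Finset.sum_mul, ← map_sum]
          congr 2
          calc ∑ k, (G (Pi.single k (F (fB i) k))).1 a
              = (∑ k, G (Pi.single k (F (fB i) k))).1 a := (ldual_sum_apply _ _ _).symm
            _ = (fB i).1 a := by rw [← map_sum, Finset.univ_sum_single, hGF]
      _ = a := hdb a

end Helpers

/-- A ring extension `B → A` is a QF extension (left and right QF) if and only if `_B A`
is finitely generated projective and `A ∼ (_B A)* = Hom_{B-}(A, B)` as `(A,B)`-bimodules. -/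
theorem qf_iff_similar_leftDual {B A : Type} [Ring B] [Ring A] (φ : B →+* A) :
    IsQFExt φ ↔
      ((letI : Module B A := Module.compHom A φ
        Module.Finite B A ∧ Module.Projective B A) ∧
       BSim A B (fun a x => a * x) (fun x b => x * φ b) (ldualL φ) (ldualR φ)) := by
  constructor
  · rintro ⟨⟨hLfgp, hLdiv⟩, hRfgp, hRdiv⟩
    refine ⟨hLfgp, hLdiv, ?_⟩
    obtain ⟨m, y, gB, hdb⟩ := (right_fgp_iff φ).1 hRfgp
    exact qf_fwd φ y gB hdb hRdiv
  · rintro ⟨hfgp, hdiv1, hdiv2⟩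
    obtain ⟨m, x, fB, hdb⟩ := (left_fgp_iff φ).1 hfgp
    exact ⟨⟨hfgp, hdiv1⟩, (right_fgp_iff φ).2 (qf_bwdA φ x fB hdb hdiv1),
      qf_bwdB φ x fB hdb hdiv2⟩
end
end

section
/- If A/B is a separable extension, then the natural (E, E)-bimodule epimorphism E ⊗_B E → E ⊗_A E (induced by the canonical surjection) splits as a map of (E, E)-bimodules via x ⊗_A y ↦ x e¹ ⊗_B e² y, where e = e¹ ⊗ e² is a separability element; hence E ⊗_A E divides E ⊗_B E as (E, E)-bimodules, where E = End(A_B) and A → E is the left regular representation. -/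
open scoped TensorProduct

noncomputable section

section Separable

variable {B A : Type} [Ring B] [Ring A] (φ : B →+* A)

/-- `A/B` is a separable extension: there is a separability element
`e ∈ A ⊗_B A` with `e¹ e² = 1` and `a · e = e · a` for all `a`. -/
def IsSepExt : Prop :=
  ∃ e : TensorSq φ, tmul' φ e = 1 ∧ ∀ a : A, tL φ a e = tR φ a e

/-- The canonical `(E,E)`-bimodule epimorphism `E ⊗_B E → E ⊗_A E`, where
`E = End(A_B)` and `A → E` is the left regular representation. -/
def towerProj : TensorSq ((lam φ).comp φ) →+ TensorSq (lam φ) :=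
  QuotientAddGroup.map _ _ (AddMonoidHom.id _)
    (by
      show tensorRel ((lam φ).comp φ) ≤ AddSubgroup.comap _ (tensorRel (lam φ))
      rw [tensorRel, AddSubgroup.closure_le]
      rintro z ⟨x, y, b, rfl⟩
      simp only [SetLike.mem_coe, AddSubgroup.mem_comap, AddMonoidHom.id_apply]
      exact AddSubgroup.subset_closure ⟨x, y, φ b, by simp [RingHom.comp_apply]⟩)

end Separable
section Aux

variable {R S : Type} [Ring R] [Ring S] (ψ : R →+* S)

theorem tmk_add_left (x x' y : S) :
    tmk ψ (x + x') y = tmk ψ x y + tmk ψ x' y := by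
  unfold tmk
  rw [TensorProduct.add_tmul]
  rfl

theorem tmk_add_right (x y y' : S) :
    tmk ψ x (y + y') = tmk ψ x y + tmk ψ x y' := by
  unfold tmk
  rw [TensorProduct.tmul_add]
  rfl

theorem tmk_zero_left (y : S) : tmk ψ 0 y = 0 := by
  unfold tmk
  rw [TensorProduct.zero_tmul]
  rfl

theorem tmk_rel (x y : S) (r : R) :
    tmk ψ (x * ψ r) y = tmk ψ x (ψ r * y) := by
  unfold tmk
  refine QuotientAddGroup.eq.mpr ?_
  have : (x * ψ r) ⊗ₜ[ℤ] y - x ⊗ₜ[ℤ] (ψ r * y) ∈ tensorRel ψ :=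
    AddSubgroup.subset_closure ⟨x, y, r, rfl⟩
  have h2 := (tensorRel ψ).neg_mem this
  simpa [sub_eq_neg_add] using h2

theorem TensorSq.ind {p : TensorSq ψ → Prop} (zero : p 0)
    (tmk : ∀ x y, p (tmk ψ x y)) (add : ∀ a b, p a → p b → p (a + b)) :
    ∀ z, p z := by
  intro z
  obtain ⟨w, rfl⟩ := QuotientAddGroup.mk_surjective z
  induction w using TensorProduct.induction_on with
  | zero => exact zero
  | tmul x y => exact tmk x y
  | add a b ha hb => exact add _ _ ha hb

theorem tL_tmk (a x y : S) : tL ψ a (tmk ψ x y) = tmk ψ (a * x) y := rfl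

theorem tR_tmk (a x y : S) : tR ψ a (tmk ψ x y) = tmk ψ x (y * a) := rfl

theorem tmul'_tmk (x y : S) : tmul' ψ (tmk ψ x y) = x * y := rfl

def liftTS {T : Type} [AddCommGroup T] (f : S →+ S →+ T)
    (hf : ∀ (x y : S) (r : R), f (x * ψ r) y = f x (ψ r * y)) :
    TensorSq ψ →+ T :=
  QuotientAddGroup.lift _ (TensorProduct.liftAddHom f (fun r m n => by rw [map_zsmul, map_zsmul, AddMonoidHom.smul_apply]))
    (by
      intro z hz
      induction hz using AddSubgroup.closure_induction with
      | mem z hz =>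
        obtain ⟨x, y, r, rfl⟩ := hz
        simp [TensorProduct.liftAddHom_tmul, hf x y r]
      | zero => simp
      | add a b _ _ ha hb =>
        simp only [AddMonoidHom.mem_ker] at ha hb ⊢
        simp [map_add, ha, hb]
      | neg a _ ha =>
        simp only [AddMonoidHom.mem_ker] at ha ⊢
        simp [ha])

theorem liftTS_tmk {T : Type} [AddCommGroup T] (f : S →+ S →+ T)
    (hf : ∀ (x y : S) (r : R), f (x * ψ r) y = f x (ψ r * y)) (x y : S) :
    liftTS ψ f hf (tmk ψ x y) = f x y := rfl

end Aux
section SigmaDef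

variable {B A : Type} [Ring B] [Ring A] (φ : B →+* A)

/-- For `x y ∈ E`, the map `A ⊗_B A → E ⊗_B E`, `u ⊗ v ↦ (x λ(u)) ⊗ (λ(v) y)`. -/
def F2 (x y : ↥(endR φ)) : TensorSq φ →+ TensorSq ((lam φ).comp φ) :=
  liftTS φ
    (AddMonoidHom.mk' (fun u => AddMonoidHom.mk'
        (fun v => tmk ((lam φ).comp φ) (x * lam φ u) (lam φ v * y))
        (fun v v' => by
          show tmk ((lam φ).comp φ) (x * lam φ u) (lam φ (v + v') * y) = _ + _
          rw [RingHom.map_add, add_mul, tmk_add_right]))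
      (fun u u' => AddMonoidHom.ext fun v => by
        show tmk ((lam φ).comp φ) (x * lam φ (u + u')) (lam φ v * y) = _ + _
        rw [RingHom.map_add, mul_add, tmk_add_left]
        rfl))
    (fun u v b => by
      show tmk ((lam φ).comp φ) (x * lam φ (u * φ b)) (lam φ v * y)
        = tmk ((lam φ).comp φ) (x * lam φ u) (lam φ (φ b * v) * y)
      have h1 : x * lam φ (u * φ b) = (x * lam φ u) * ((lam φ).comp φ) b := by
        rw [RingHom.map_mul, mul_assoc]; rfl
      have h2 : ((lam φ).comp φ) b * (lam φ v * y) = lam φ (φ b * v) * y := by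
        rw [RingHom.map_mul, mul_assoc]; rfl
      rw [h1, tmk_rel, h2])

theorem F2_tmk (x y : ↥(endR φ)) (u v : A) :
    F2 φ x y (tmk φ u v) = tmk ((lam φ).comp φ) (x * lam φ u) (lam φ v * y) := rfl

theorem F2_add_left (x x' y : ↥(endR φ)) (z : TensorSq φ) :
    F2 φ (x + x') y z = F2 φ x y z + F2 φ x' y z := by
  induction z using TensorSq.ind with
  | zero => simp
  | tmk u v => simp only [F2_tmk, add_mul, tmk_add_left]
  | add a b ha hb =>
    simp only [map_add, ha, hb]
    abel

theorem F2_add_right (x y y' : ↥(endR φ)) (z : TensorSq φ) :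
    F2 φ x (y + y') z = F2 φ x y z + F2 φ x y' z := by
  induction z using TensorSq.ind with
  | zero => simp
  | tmk u v => simp only [F2_tmk, mul_add, tmk_add_right]
  | add a b ha hb =>
    simp only [map_add, ha, hb]
    abel

theorem F2_mulA_left (x y : ↥(endR φ)) (a : A) (z : TensorSq φ) :
    F2 φ (x * lam φ a) y z = F2 φ x y (tL φ a z) := by
  induction z using TensorSq.ind with
  | zero => simp
  | tmk u v => rw [tL_tmk, F2_tmk, F2_tmk, RingHom.map_mul, mul_assoc]
  | add a b ha hb => simp only [map_add, ha, hb]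

theorem F2_mulA_right (x y : ↥(endR φ)) (a : A) (z : TensorSq φ) :
    F2 φ x (lam φ a * y) z = F2 φ x y (tR φ a z) := by
  induction z using TensorSq.ind with
  | zero => simp
  | tmk u v => rw [tR_tmk, F2_tmk, F2_tmk, RingHom.map_mul, mul_assoc]
  | add a b ha hb => simp only [map_add, ha, hb]

theorem F2_gmul_left (g x y : ↥(endR φ)) (z : TensorSq φ) :
    F2 φ (g * x) y z = tL ((lam φ).comp φ) g (F2 φ x y z) := by
  induction z using TensorSq.ind with
  | zero => simp
  | tmk u v => rw [F2_tmk, F2_tmk, tL_tmk, mul_assoc]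
  | add a b ha hb => simp only [map_add, ha, hb]

theorem F2_gmul_right (g x y : ↥(endR φ)) (z : TensorSq φ) :
    F2 φ x (y * g) z = tR ((lam φ).comp φ) g (F2 φ x y z) := by
  induction z using TensorSq.ind with
  | zero => simp
  | tmk u v => rw [F2_tmk, F2_tmk, tR_tmk, mul_assoc]
  | add a b ha hb => simp only [map_add, ha, hb]

theorem towerProj_tmk (x y : ↥(endR φ)) :
    towerProj φ (tmk ((lam φ).comp φ) x y) = tmk (lam φ) x y := rfl

theorem towerProj_F2 (x y : ↥(endR φ)) (z : TensorSq φ) :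
    towerProj φ (F2 φ x y z) = tmk (lam φ) (x * lam φ (tmul' φ z)) y := by
  induction z using TensorSq.ind with
  | zero => rw [map_zero, map_zero, map_zero, RingHom.map_zero, mul_zero, tmk_zero_left]
  | tmk u v =>
    rw [F2_tmk, towerProj_tmk, tmul'_tmk, RingHom.map_mul, ← mul_assoc]
    exact (tmk_rel (lam φ) (x * lam φ u) y v).symm
  | add a b ha hb =>
    rw [map_add, map_add, ha, hb, map_add, RingHom.map_add, mul_add, tmk_add_left]

theorem towerProj_tL (g : ↥(endR φ)) (z : TensorSq ((lam φ).comp φ)) :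
    towerProj φ (tL ((lam φ).comp φ) g z) = tL (lam φ) g (towerProj φ z) := by
  induction z using TensorSq.ind with
  | zero => simp
  | tmk x y => rw [tL_tmk, towerProj_tmk, towerProj_tmk, tL_tmk]
  | add a b ha hb => simp only [map_add, ha, hb]

theorem towerProj_tR (g : ↥(endR φ)) (z : TensorSq ((lam φ).comp φ)) :
    towerProj φ (tR ((lam φ).comp φ) g z) = tR (lam φ) g (towerProj φ z) := by
  induction z using TensorSq.ind with
  | zero => simp
  | tmk x y => rw [tR_tmk, towerProj_tmk, towerProj_tmk, tR_tmk]
  | add a b ha hb => simp only [map_add, ha, hb]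

/-- The splitting `E ⊗_A E → E ⊗_B E`, `x ⊗ y ↦ x e¹ ⊗ e² y`. -/
def sigmaMap (e : TensorSq φ) (he : ∀ a : A, tL φ a e = tR φ a e) :
    TensorSq (lam φ) →+ TensorSq ((lam φ).comp φ) :=
  liftTS (lam φ)
    (AddMonoidHom.mk' (fun x => AddMonoidHom.mk' (fun y => F2 φ x y e)
        (fun y y' => F2_add_right φ x y y' e))
      (fun x x' => AddMonoidHom.ext fun y => by
        show F2 φ (x + x') y e = _ + _
        exact F2_add_left φ x x' y e))
    (fun x y a => by
      show F2 φ (x * lam φ a) y e = F2 φ x (lam φ a * y) e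
      rw [F2_mulA_left, F2_mulA_right, he a])

theorem sigmaMap_tmk (e : TensorSq φ) (he : ∀ a : A, tL φ a e = tR φ a e)
    (x y : ↥(endR φ)) :
    sigmaMap φ e he (tmk (lam φ) x y) = F2 φ x y e := rfl

end SigmaDef

/-- If `A/B` is a separable extension, then the canonical `(E,E)`-bimodule epimorphism
`E ⊗_B E → E ⊗_A E` splits as a map of `(E,E)`-bimodules (via
`x ⊗_A y ↦ x e¹ ⊗_B e² y` for a separability element `e`); hence `E ⊗_A E` divides
`E ⊗_B E` as `(E,E)`-bimodules, where `E = End(A_B)`. -/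
theorem separable_towerProj_splits {B A : Type} [Ring B] [Ring A] (φ : B →+* A)
    (hsep : IsSepExt φ) :
    (∃ σ : TensorSq (lam φ) →+ TensorSq ((lam φ).comp φ),
      (∀ (e : ↥(endR φ)) (t : TensorSq (lam φ)),
        σ (tL (lam φ) e t) = tL ((lam φ).comp φ) e (σ t)) ∧
      (∀ (e : ↥(endR φ)) (t : TensorSq (lam φ)),
        σ (tR (lam φ) e t) = tR ((lam φ).comp φ) e (σ t)) ∧
      ∀ t, towerProj φ (σ t) = t) ∧
    BDiv (↥(endR φ)) (↥(endR φ))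
      (fun e t => tL (lam φ) e t) (fun t e => tR (lam φ) e t)
      (fun e t => tL ((lam φ).comp φ) e t) (fun t e => tR ((lam φ).comp φ) e t) := by

  obtain ⟨e, he1, he2⟩ := hsep
  set ψ' := (lam φ).comp φ with hψ'
  set σ := sigmaMap φ e he2 with hσ
  have hL : ∀ (g : ↥(endR φ)) (t : TensorSq (lam φ)),
      σ (tL (lam φ) g t) = tL ψ' g (σ t) := by
    intro g t
    induction t using TensorSq.ind with
    | zero => simp
    | tmk x y => rw [tL_tmk, hσ, sigmaMap_tmk, sigmaMap_tmk, F2_gmul_left]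
    | add a b ha hb => simp only [map_add, ha, hb]
  have hR : ∀ (g : ↥(endR φ)) (t : TensorSq (lam φ)),
      σ (tR (lam φ) g t) = tR ψ' g (σ t) := by
    intro g t
    induction t using TensorSq.ind with
    | zero => simp
    | tmk x y => rw [tR_tmk, hσ, sigmaMap_tmk, sigmaMap_tmk, F2_gmul_right]
    | add a b ha hb => simp only [map_add, ha, hb]
  have hsplit : ∀ t, towerProj φ (σ t) = t := by
    intro t
    induction t using TensorSq.ind with
    | zero => simp
    | tmk x y =>
      rw [hσ, sigmaMap_tmk, towerProj_F2, he1, RingHom.map_one, mul_one]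
    | add a b ha hb => simp only [map_add, ha, hb]
  refine ⟨⟨σ, hL, hR, hsplit⟩, 1,
    AddMonoidHom.mk' (fun m _ => σ m) (fun a b => funext fun i => map_add σ a b),
    AddMonoidHom.mk' (fun v => towerProj φ (v 0))
      (fun a b => by simp only [Pi.add_apply, map_add]),
    ?_, ?_, ?_, ?_, ?_⟩
  · intro l m
    funext i
    exact hL l m
  · intro m r
    funext i
    exact hR r m
  · intro l v
    exact towerProj_tL φ l (v 0)
  · intro v r
    exact towerProj_tR φ r (v 0)
  · intro m
    exact hsplit m
end
end
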